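/- Let L be a self-dual lattice of rank n with covering radius ρ, and let v ∈ L be a primitive vector. Then the covering radius of the lattice L(v)* = p_v(L) (the orthogonal projection of L onto v^⊥) is at most sqrt(ρ² − 1/(4‖v‖²)). -/

import Mathlib

open scoped InnerProductSpace

/-- If `L` is a self-dual lattice with covering radius `ρ` and `v ∈ L` is primitive,
then the covering radius of `L(v)* = p_v(L)` (inside the hyperplane `v^⊥`) is at
most `√(ρ² - 1/(4‖v‖²))`. -/
theorem stmt_4 (n : ℕ) (b : Module.Basis (Fin n) ℝ (EuclideanSpace ℝ (Fin n)))
    (L : AddSubgroup (EuclideanSpace ℝ (Fin n)))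
    (hL : (L : Set (EuclideanSpace ℝ (Fin n))) = ↑(Submodule.span ℤ (Set.range ⇑b)))
    (hselfdual : (L : Set (EuclideanSpace ℝ (Fin n))) =
      {x | ∀ y ∈ L, ∃ m : ℤ, ⟪x, y⟫_ℝ = (m : ℝ)})
    (v : EuclideanSpace ℝ (Fin n)) (hv : v ∈ L) (hv0 : v ≠ 0)
    (hprim : ∀ d : ℕ, 1 < d → ∀ w ∈ L, (d : ℝ) • w ≠ v)
    (ρ : ℝ) (hρ : ρ = sInf {μ : ℝ | ∀ x : EuclideanSpace ℝ (Fin n), ∃ w ∈ L, dist x w ≤ μ})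
    (hcov : ∀ x : EuclideanSpace ℝ (Fin n), ∃ w ∈ L, dist x w ≤ ρ) :
    ∀ x ∈ (ℝ ∙ v)ᗮ, ∃ y ∈ L,
      dist x ((Submodule.orthogonalProjectionOnto ((ℝ ∙ v)ᗮ) y : (ℝ ∙ v)ᗮ) : EuclideanSpace ℝ (Fin n))
        ≤ Real.sqrt (ρ ^ 2 - 1 / (4 * ⟪v, v⟫_ℝ)) := by
  intro x hx
  have hk : (0:ℝ) < ⟪v, v⟫_ℝ := by
    have h0 : 0 < ‖v‖ := norm_pos_iff.mpr hv0
    rw [real_inner_self_eq_norm_sq]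
    positivity
  set k : ℝ := ⟪v, v⟫_ℝ with hkdef
  have hk0 : k ≠ 0 := ne_of_gt hk
  obtain ⟨w, hw, hdist⟩ := hcov (x + (1/(2*k)) • v)
  refine ⟨w, hw, ?_⟩
  -- integer inner product
  have hmem : w ∈ {x : EuclideanSpace ℝ (Fin n) | ∀ y ∈ L, ∃ m : ℤ, ⟪x, y⟫_ℝ = (m : ℝ)} := by
    rw [← hselfdual]; exact hw
  obtain ⟨m, hm⟩ := hmem v hv
  set Pw : EuclideanSpace ℝ (Fin n) :=
    ((Submodule.orthogonalProjectionOnto ((ℝ ∙ v)ᗮ) w : (ℝ ∙ v)ᗮ) : EuclideanSpace ℝ (Fin n)) with hPw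
  have hdecomp : w = ((m : ℝ)/k) • v + Pw := by
    have h1 := Submodule.starProjection_add_starProjection_orthogonal (K := ℝ ∙ v) w
    simp only [Submodule.starProjection_apply] at h1
    have h2 : ((Submodule.orthogonalProjectionOnto (ℝ ∙ v) w : EuclideanSpace ℝ (Fin n))) =
        ((m : ℝ)/k) • v := by
      rw [← Submodule.starProjection_apply, Submodule.starProjection_singleton, real_inner_comm, hm]
      congr 2
      rw [hkdef, real_inner_self_eq_norm_sq]
      norm_cast
    rw [← h1, h2]
  have hPmem : Pw ∈ (ℝ ∙ v)ᗮ := (Submodule.orthogonalProjectionOnto ((ℝ ∙ v)ᗮ) w).2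
  set c : ℝ := 1/(2*k) - (m : ℝ)/k with hc
  have hzw : (x + (1/(2*k)) • v) - w = (x - Pw) + c • v := by
    rw [hdecomp, hc, sub_smul]
    abel
  have hperp : ⟪x - Pw, c • v⟫_ℝ = 0 := by
    have hxP : x - Pw ∈ (ℝ ∙ v)ᗮ := Submodule.sub_mem _ hx hPmem
    exact (Submodule.mem_orthogonal' _ _).1 hxP _
      (Submodule.smul_mem _ c (Submodule.mem_span_singleton_self v))
  have hcv : ‖c • v‖^2 = c^2 * k := by
    rw [norm_smul, mul_pow, hkdef, real_inner_self_eq_norm_sq]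
    simp [sq_abs]
  have hpyth : ‖(x + (1/(2*k)) • v) - w‖^2 = ‖x - Pw‖^2 + c^2 * k := by
    rw [hzw, norm_add_sq_real, hperp, hcv]
    ring
  have hclow : 1/(4*k) ≤ c^2 * k := by
    have hcval : c = (1 - 2*(m:ℝ))/(2*k) := by rw [hc]; field_simp
    have hodd : (1:ℝ) ≤ (1 - 2*(m:ℝ))^2 := by
      have hne : (1 - 2*m : ℤ) ≠ 0 := by omega
      have hpos : (0:ℤ) < (1 - 2*m)^2 := by positivity
      have h1 : (1:ℤ) ≤ (1 - 2*m)^2 := hpos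
      have h2 : (1:ℝ) ≤ ((1 - 2*m : ℤ) : ℝ)^2 := by exact_mod_cast h1
      push_cast at h2
      linarith
    rw [hcval, div_pow]
    rw [div_mul_eq_mul_div, div_le_div_iff₀ (by positivity) (by positivity)]
    nlinarith [hk]
  clear_value k c
  have hnorm : ‖x - Pw‖^2 ≤ ρ^2 - 1/(4*k) := by
    have hd : ‖(x + (1/(2*k)) • v) - w‖ ≤ ρ := by rwa [← dist_eq_norm]
    have hρ0 : 0 ≤ ρ := le_trans (norm_nonneg _) hd
    have := sq_le_sq' (by linarith [norm_nonneg ((x + (1/(2*k)) • v) - w)]) hd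
    rw [hpyth] at this
    linarith
  rw [dist_eq_norm]
  rw [show ‖x - Pw‖ = Real.sqrt (‖x - Pw‖^2) by rw [Real.sqrt_sq (norm_nonneg _)]]
  exact Real.sqrt_le_sqrt hnorm
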